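/- arXiv:1606.00770 — 3 statements merged into one kernel-verified Lean document; each statement's English description precedes it below -/
import Mathlib

section
/- (Sobol' formula) For a square-integrable f on [0,1]^d with x = (y,z) a partition of the variables and z' an independent copy of z, the variance D_y corresponding to the subset y satisfies D_y = ∫ f(y,z) f(y,z') dy dz dz' − f_0^2. -/
open MeasureTheory

instance sobol_m01_prob :
    IsProbabilityMeasure ((volume : Measure ℝ).restrict (Set.Icc (0:ℝ) 1)) := by
  constructor
  rw [Measure.restrict_apply_univ, Real.volume_Icc]
  norm_num

/-- `Measure.pi` does not depend on the `Fintype` instance. -/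
lemma sobol_pi_unique {ι : Type*} [inst : Fintype ι] [Unique ι] {m' : Measure ℝ}
    [SigmaFinite m'] (g : (ι → ℝ) → ℝ) :
    ∫ a, g a ∂(Measure.pi fun _ : ι => m') = ∫ t, g (fun _ => t) ∂m' := by
  rw [Subsingleton.elim inst Unique.fintype]
  exact (((measurePreserving_funUnique m' ι).symm _).integral_comp
    (MeasurableEquiv.funUnique ι ℝ).symm.measurableEmbedding g).symm

lemma sobol_mp_fst {α β : Type*} [MeasurableSpace α] [MeasurableSpace β]
    (μ : Measure α) (ν : Measure β) [SigmaFinite μ] [IsProbabilityMeasure ν] :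
    MeasurePreserving Prod.fst (μ.prod ν) μ :=
  ⟨measurable_fst, by rw [Measure.map_fst_prod]; simp⟩

lemma sobol_mp_snd {α β : Type*} [MeasurableSpace α] [MeasurableSpace β]
    (μ : Measure α) (ν : Measure β) [IsProbabilityMeasure μ] [SigmaFinite ν] :
    MeasurePreserving Prod.snd (μ.prod ν) ν :=
  ⟨measurable_snd, by rw [Measure.map_snd_prod]; simp⟩

/-- Integrating out one coordinate: if all sections in direction `i` integrate to zero,
the whole integral is zero. -/
lemma sobol_lemA {d : ℕ} (μ : Measure (Fin d → ℝ))
    (hμ : μ = Measure.pi fun _ => (volume : Measure ℝ).restrict (Set.Icc 0 1))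
    (i : Fin d) (h : (Fin d → ℝ) → ℝ) (hint : Integrable h μ)
    (hz : ∀ y, ∫ t in Set.Icc (0:ℝ) 1, h (Function.update y i t) = 0) :
    ∫ x, h x ∂μ = 0 := by
  classical
  subst hμ
  set m : Measure ℝ := (volume : Measure ℝ).restrict (Set.Icc 0 1) with hm
  haveI : Unique {j : Fin d // j = i} := ⟨⟨⟨i, rfl⟩⟩, by rintro ⟨j, rfl⟩; rfl⟩
  set e := MeasurableEquiv.piEquivPiSubtypeProd (fun _ : Fin d => ℝ) (fun j => j = i) with he
  have mp := measurePreserving_piEquivPiSubtypeProd (fun _ : Fin d => m) (fun j => j = i)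
  have hint' := ((mp.symm e).integrable_comp hint.aestronglyMeasurable).mpr hint
  rw [← (mp.symm e).integral_comp e.symm.measurableEmbedding h,
    integral_prod_symm (fun z => h (e.symm z)) hint']
  refine Eq.trans (integral_congr_ae (Filter.Eventually.of_forall fun b => ?_))
    (integral_zero _ _)
  beta_reduce
  refine Eq.trans (sobol_pi_unique (inst := Subtype.fintype fun j => j = i) (fun a => h (e.symm (a, b)))) ?_
  obtain ⟨y₀, hy₀⟩ : ∃ y, y = e.symm ((fun _ : {j : Fin d // j = i} => (0:ℝ)), b) := ⟨_, rfl⟩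
  have harg : ∀ t : ℝ,
      e.symm ((fun _ : {j : Fin d // j = i} => t), b) = Function.update y₀ i t := by
    intro t
    rw [hy₀]
    funext j
    by_cases hj : j = i
    · subst hj
      simp [he, MeasurableEquiv.piEquivPiSubtypeProd, Equiv.piEquivPiSubtypeProd]
    · simp [he, MeasurableEquiv.piEquivPiSubtypeProd, Equiv.piEquivPiSubtypeProd, hj,
        Function.update_of_ne hj]
  simp_rw [harg]
  rw [hm]
  exact hz _

/-- The gluing map `(x, x') ↦ (x on K, x' off K)` preserves the product of two copies of
the uniform measure on the cube. -/
lemma sobol_glue_mp {d : ℕ} (μ : Measure (Fin d → ℝ))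
    (hμ : μ = Measure.pi fun _ => (volume : Measure ℝ).restrict (Set.Icc 0 1))
    (K : Finset (Fin d)) :
    MeasurePreserving
      (fun p : (Fin d → ℝ) × (Fin d → ℝ) => fun j => if j ∈ K then p.1 j else p.2 j)
      (μ.prod μ) μ := by
  classical
  subst hμ
  set m : Measure ℝ := (volume : Measure ℝ).restrict (Set.Icc 0 1) with hm
  set e := MeasurableEquiv.piEquivPiSubtypeProd (fun _ : Fin d => ℝ) (fun j => j ∈ K) with he
  have mp := measurePreserving_piEquivPiSubtypeProd (fun _ : Fin d => m) (fun j => j ∈ K)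
  have mp1 := MeasurePreserving.comp (sobol_mp_fst _ _) mp
  have mp2 := MeasurePreserving.comp (sobol_mp_snd _ _) mp
  have hcomp := (mp.symm e).comp (mp1.prod mp2)
  have hfun : (⇑e.symm ∘ Prod.map (fun x : Fin d → ℝ => (e x).1) (fun x : Fin d → ℝ => (e x).2))
      = fun p : (Fin d → ℝ) × (Fin d → ℝ) => fun j => if j ∈ K then p.1 j else p.2 j := by
    funext p
    funext j
    by_cases hj : j ∈ K <;>
      simp [he, MeasurableEquiv.piEquivPiSubtypeProd, Equiv.piEquivPiSubtypeProd, hj,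
        Function.comp]
  rw [← hfun]
  exact hcomp

/-- Product of two `L²` functions is integrable. -/
lemma sobol_integrable_mul {α : Type*} [MeasurableSpace α] {μ : Measure α} {g h : α → ℝ}
    (hg : MemLp g 2 μ) (hh : MemLp h 2 μ) : Integrable (fun x => g x * h x) μ := by
  have hs : (1 : ENNReal) / 1 = 1 / 2 + 1 / 2 := by
    have h2 : (2 : ENNReal) / 2 = 1 := ENNReal.div_self (by norm_num) (by norm_num)
    have h1 : (1 : ENNReal) / 1 = 1 := by
      rw [ENNReal.div_eq_inv_mul, inv_one, one_mul]
    rw [ENNReal.div_add_div_same, one_add_one_eq_two, h2, h1]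
  have := hh.smul (r := 1) hg
  exact memLp_one_iff_integrable.mp (by simp only [smul_eq_mul] at this; exact this)

/-- Sobol' formula: for a square-integrable `f` on `[0,1]^d` with variable partition
`x = (y,z)` given by the index set `K`, the variance `D_y` (the sum of the partial
variances over nonempty subsets of `K`) satisfies
`D_y = ∫ f(y,z) f(y,z') dy dz dz' − f₀²`. -/
theorem sobol_formula (d : ℕ) (f : (Fin d → ℝ) → ℝ)
    (μ : Measure (Fin d → ℝ))
    (hμ : μ = Measure.pi fun _ => (volume : Measure ℝ).restrict (Set.Icc 0 1))
    (F : Finset (Fin d) → (Fin d → ℝ) → ℝ)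
    (hf : MemLp f 2 μ) (hF : ∀ u, MemLp (F u) 2 μ)
    (hf0 : ∀ x, F ∅ x = ∫ y, f y ∂μ)
    (hdec : ∀ x, f x = ∑ u : Finset (Fin d), F u x)
    (hdep : ∀ u, ∀ x y : Fin d → ℝ, (∀ i ∈ u, x i = y i) → F u x = F u y)
    (hzero : ∀ u, u ≠ ∅ → ∀ i ∈ u, ∀ x : Fin d → ℝ,
      ∫ t in Set.Icc (0 : ℝ) 1, F u (Function.update x i t) = 0)
    (K : Finset (Fin d)) :
    ∑ u ∈ Finset.univ.filter (fun u : Finset (Fin d) => u ≠ ∅ ∧ u ⊆ K),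
        ∫ x, (F u x) ^ 2 ∂μ
      = (∫ x, ∫ x', f x * f (fun j => if j ∈ K then x j else x' j) ∂μ ∂μ)
          - (∫ x, f x ∂μ) ^ 2 := by
  classical
  haveI : IsProbabilityMeasure μ := by rw [hμ]; infer_instance
  -- integrability of products on μ
  have hmul : ∀ u v : Finset (Fin d), Integrable (fun x => F u x * F v x) μ :=
    fun u v => sobol_integrable_mul (hF u) (hF v)
  -- orthogonality of the ANOVA pieces
  have horth : ∀ u v : Finset (Fin d), u ≠ v → ∫ x, F u x * F v x ∂μ = 0 := by
    intro u v huv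
    have key : ∀ a b : Finset (Fin d), ∀ i : Fin d, i ∈ a → i ∉ b →
        ∫ x, F a x * F b x ∂μ = 0 := by
      intro a b i hia hib
      refine sobol_lemA μ hμ i _ (hmul a b) ?_
      intro y
      have h1 : ∀ t : ℝ, F b (Function.update y i t) = F b y := fun t =>
        hdep b _ _ (fun j hj => Function.update_of_ne (fun hh => hib (by rwa [hh] at hj)) _ _)
      calc ∫ t in Set.Icc (0:ℝ) 1, F a (Function.update y i t) * F b (Function.update y i t)
          = ∫ t in Set.Icc (0:ℝ) 1, F a (Function.update y i t) * F b y := by simp_rw [h1]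
        _ = (∫ t in Set.Icc (0:ℝ) 1, F a (Function.update y i t)) * F b y :=
            integral_mul_const _ _
        _ = 0 := by rw [hzero a (Finset.ne_empty_of_mem hia) i hia y, zero_mul]
    by_cases hsub : u ⊆ v
    · have hns : ¬ v ⊆ u := fun h => huv (Finset.Subset.antisymm hsub h)
      obtain ⟨i, hiv, hiu⟩ := Finset.not_subset.mp hns
      have hcm : (fun x => F u x * F v x) = fun x => F v x * F u x :=
        funext fun x => mul_comm _ _
      rw [hcm]
      exact key v u i hiv hiu
    · obtain ⟨i, hiu, hiv⟩ := Finset.not_subset.mp hsub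
      exact key u v i hiu hiv
  -- the gluing map and associated measure-theoretic data
  set ν : Measure ((Fin d → ℝ) × (Fin d → ℝ)) := μ.prod μ with hν
  haveI : IsProbabilityMeasure ν := by rw [hν]; infer_instance
  set glue : (Fin d → ℝ) × (Fin d → ℝ) → Fin d → ℝ :=
    fun p j => if j ∈ K then p.1 j else p.2 j with hg
  have mpg : MeasurePreserving glue ν μ := sobol_glue_mp μ hμ K
  have mpfst : MeasurePreserving Prod.fst ν μ :=
    ⟨measurable_fst, by rw [hν, Measure.map_fst_prod]; simp⟩
  have hFfst : ∀ u, MemLp (fun p : (Fin d → ℝ) × (Fin d → ℝ) => F u p.1) 2 ν :=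
    fun u => (hF u).comp_measurePreserving mpfst
  have hFg : ∀ v, MemLp (fun p => F v (glue p)) 2 ν :=
    fun v => (hF v).comp_measurePreserving mpg
  have hffst : MemLp (fun p : (Fin d → ℝ) × (Fin d → ℝ) => f p.1) 2 ν :=
    hf.comp_measurePreserving mpfst
  have hfg : MemLp (fun p => f (glue p)) 2 ν := hf.comp_measurePreserving mpg
  have hIint : Integrable (fun p => f p.1 * f (glue p)) ν := sobol_integrable_mul hffst hfg
  have Tint : ∀ u v : Finset (Fin d), Integrable (fun p => F u p.1 * F v (glue p)) ν :=
    fun u v => sobol_integrable_mul (hFfst u) (hFg v)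
  -- step A : the double integral as an integral over the product measure
  have eA : (∫ x, ∫ x', f x * f (fun j => if j ∈ K then x j else x' j) ∂μ ∂μ)
      = ∫ p, f p.1 * f (glue p) ∂ν := by
    exact integral_integral hIint
  -- step B : expansion into a double sum
  have eB : (∫ p, f p.1 * f (glue p) ∂ν)
      = ∑ w : Finset (Fin d) × Finset (Fin d), ∫ p, F w.1 p.1 * F w.2 (glue p) ∂ν := by
    have hexp : (fun p => f p.1 * f (glue p))
        = fun p => ∑ w : Finset (Fin d) × Finset (Fin d), F w.1 p.1 * F w.2 (glue p) := by
      funext p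
      rw [hdec p.1, hdec (glue p), Finset.sum_mul_sum, ← Finset.sum_product',
        Finset.univ_product_univ]
    rw [hexp, integral_finset_sum _ (fun w _ => Tint w.1 w.2)]
  -- step C : evaluation of each term
  have eC : ∀ u v : Finset (Fin d),
      (∫ p, F u p.1 * F v (glue p) ∂ν)
        = if u = v ∧ u ⊆ K then ∫ x, (F u x) ^ 2 ∂μ else 0 := by
    intro u v
    by_cases hvK : v ⊆ K
    · have hgv : ∀ p : (Fin d → ℝ) × (Fin d → ℝ), F v (glue p) = F v p.1 := by
        intro p
        refine hdep v _ _ fun i hi => ?_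
        simp [hg, hvK hi]
      have h1 : (∫ p, F u p.1 * F v (glue p) ∂ν) = ∫ x, F u x * F v x ∂μ := by
        calc (∫ p, F u p.1 * F v (glue p) ∂ν) = ∫ p, F u p.1 * F v p.1 ∂ν :=
              integral_congr_ae (Filter.Eventually.of_forall fun p => by simp only [hgv])
          _ = ∫ x, ∫ x', F u x * F v x ∂μ ∂μ := by
              rw [hν]
              exact integral_prod _
                ((Tint u v).congr (Filter.Eventually.of_forall fun p => by simp only [hgv]))
          _ = ∫ x, F u x * F v x ∂μ := by simp
      by_cases huv : u = v
      · subst huv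
        rw [if_pos ⟨rfl, hvK⟩, h1]
        simp_rw [← sq]
      · rw [if_neg (fun h : u = v ∧ u ⊆ K => huv h.1), h1]
        exact horth u v huv
    · obtain ⟨i, hiv, hiK⟩ := Finset.not_subset.mp hvK
      have hvne : v ≠ ∅ := Finset.ne_empty_of_mem hiv
      have hinner : ∀ x : Fin d → ℝ, (∫ x', F v (glue (x, x')) ∂μ) = 0 := by
        intro x
        by_cases hint2 : Integrable (fun x' => F v (glue (x, x'))) μ
        · refine sobol_lemA μ hμ i _ hint2 ?_
          intro y
          have hupd : ∀ t : ℝ,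
              glue (x, Function.update y i t) = Function.update (glue (x, y)) i t := by
            intro t
            funext j
            by_cases hj : j = i
            · subst hj
              simp [hg, hiK]
            · by_cases hjK : j ∈ K <;>
                simp [hg, hjK, hj, Function.update_of_ne hj]
          calc ∫ t in Set.Icc (0:ℝ) 1, F v (glue (x, Function.update y i t))
              = ∫ t in Set.Icc (0:ℝ) 1, F v (Function.update (glue (x, y)) i t) := by
                simp_rw [hupd]
            _ = 0 := hzero v hvne i hiv _
        · exact integral_undef hint2
      have hzero2 : (∫ p, F u p.1 * F v (glue p) ∂ν) = 0 := by
        have := integral_prod (fun p => F u p.1 * F v (glue p)) (hν ▸ Tint u v)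
        rw [hν, this]
        calc ∫ x, ∫ x', F u x * F v (glue (x, x')) ∂μ ∂μ
            = ∫ x, F u x * ∫ x', F v (glue (x, x')) ∂μ ∂μ := by
              congr 1
              funext x
              exact integral_const_mul _ _
          _ = 0 := by simp [hinner]
      rw [hzero2, if_neg (fun h : u = v ∧ u ⊆ K => hvK (h.1 ▸ h.2))]
  -- step D : summing the indicator
  have eD : (∑ w : Finset (Fin d) × Finset (Fin d),
        if w.1 = w.2 ∧ w.1 ⊆ K then ∫ x, (F w.1 x) ^ 2 ∂μ else 0)
      = (∑ u ∈ Finset.univ.filter (fun u : Finset (Fin d) => u ≠ ∅ ∧ u ⊆ K),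
          ∫ x, (F u x) ^ 2 ∂μ) + (∫ x, f x ∂μ) ^ 2 := by
    rw [← Finset.univ_product_univ, Finset.sum_product]
    have hrow : ∀ u : Finset (Fin d),
        (∑ v : Finset (Fin d), if u = v ∧ u ⊆ K then ∫ x, (F u x) ^ 2 ∂μ else 0)
          = if u ⊆ K then ∫ x, (F u x) ^ 2 ∂μ else 0 := by
      intro u
      simp only [ite_and]
      rw [Finset.sum_ite_eq]
      simp
    simp_rw [hrow]
    rw [← Finset.sum_filter]
    have hsplit : Finset.univ.filter (fun u : Finset (Fin d) => u ⊆ K)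
        = insert ∅ (Finset.univ.filter fun u : Finset (Fin d) => u ≠ ∅ ∧ u ⊆ K) := by
      ext u
      simp only [Finset.mem_insert, Finset.mem_filter, Finset.mem_univ, true_and]
      constructor
      · intro h
        by_cases hu : u = ∅
        · exact Or.inl hu
        · exact Or.inr ⟨hu, h⟩
      · rintro (rfl | ⟨-, h⟩)
        · exact Finset.empty_subset K
        · exact h
    rw [hsplit, Finset.sum_insert (by simp)]
    have hA0 : (∫ x, (F ∅ x) ^ 2 ∂μ) = (∫ x, f x ∂μ) ^ 2 := by
      simp_rw [hf0]
      simp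
    rw [hA0]
    ring
  -- assembling everything
  have eE : (∫ p, f p.1 * f (glue p) ∂ν)
      = (∑ u ∈ Finset.univ.filter (fun u : Finset (Fin d) => u ≠ ∅ ∧ u ⊆ K),
          ∫ x, (F u x) ^ 2 ∂μ) + (∫ x, f x ∂μ) ^ 2 := by
    calc (∫ p, f p.1 * f (glue p) ∂ν)
        = ∑ w : Finset (Fin d) × Finset (Fin d), ∫ p, F w.1 p.1 * F w.2 (glue p) ∂ν := eB
      _ = ∑ w : Finset (Fin d) × Finset (Fin d),
            (if w.1 = w.2 ∧ w.1 ⊆ K then ∫ x, (F w.1 x) ^ 2 ∂μ else 0) :=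
          Finset.sum_congr rfl fun w _ => eC w.1 w.2
      _ = _ := eD
  rw [eA, eE]
  ring
end

section
/- (Sobol'–Kucherenko formula) For f square-integrable on [0,1]^d with variable partition x = (y,z) and an independent copy x' = (y',z'), D_y = ∫ f(y,z) [f(y,z') − f(y',z')] dy dz dy' dz'. -/
open MeasureTheory

/-- Sobol'–Kucherenko formula: for `f` square-integrable on `[0,1]^d` with variable
partition `x = (y,z)` given by index set `K` and an independent copy `x' = (y',z')`,
`D_y = ∫ f(y,z) [f(y,z') − f(y',z')] dx dx'`, where
`D_y = ∫ f(y,z) f(y,z') dy dz dz' − f₀²`. -/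
theorem sobol_kucherenko_formula (d : ℕ) (f : (Fin d → ℝ) → ℝ)
    (μ : Measure (Fin d → ℝ))
    (hμ : μ = Measure.pi fun _ => (volume : Measure ℝ).restrict (Set.Icc 0 1))
    (hf : MemLp f 2 μ)
    (K : Finset (Fin d)) :
    ∫ x, ∫ x', f x * (f (fun j => if j ∈ K then x j else x' j) - f x') ∂μ ∂μ
      = (∫ x, ∫ x', f x * f (fun j => if j ∈ K then x j else x' j) ∂μ ∂μ)
          - (∫ x, f x ∂μ) ^ 2 := by
  have hνprob : IsProbabilityMeasure ((volume : Measure ℝ).restrict (Set.Icc 0 1)) :=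
    ⟨by simp [Real.volume_Icc]⟩
  have hμprob : IsProbabilityMeasure μ := by
    rw [hμ]; infer_instance
  -- the recombination map
  set T : (Fin d → ℝ) × (Fin d → ℝ) → (Fin d → ℝ) :=
    fun p j => if j ∈ K then p.1 j else p.2 j with hT_def
  have hTm : Measurable T := by
    apply measurable_pi_lambda
    intro j
    by_cases h : j ∈ K
    · simpa [hT_def, h, Function.comp_def] using (measurable_pi_apply j).comp measurable_fst
    · simpa [hT_def, h, Function.comp_def] using (measurable_pi_apply j).comp measurable_snd
  have hT : MeasurePreserving T (μ.prod μ) μ := by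
    refine ⟨hTm, ?_⟩
    rw [hμ]
    refine (Measure.pi_eq fun s hs => ?_).symm
    rw [Measure.map_apply hTm (MeasurableSet.univ_pi hs)]
    have hpre : T ⁻¹' Set.pi Set.univ s =
        (Set.pi Set.univ fun j => if j ∈ K then s j else Set.univ) ×ˢ
          (Set.pi Set.univ fun j => if j ∈ K then Set.univ else s j) := by
      ext p
      simp only [Set.mem_preimage, Set.mem_pi, Set.mem_univ, true_implies, Set.mem_prod,
        hT_def]
      constructor
      · intro h
        constructor <;> intro j <;> by_cases hj : j ∈ K <;> simpa [hj] using h j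
      · rintro ⟨h1, h2⟩ j
        by_cases hj : j ∈ K
        · simpa [hj] using h1 j
        · simpa [hj] using h2 j
    rw [hpre, Measure.prod_prod, Measure.pi_pi, Measure.pi_pi, ← Finset.prod_mul_distrib]
    refine Finset.prod_congr rfl fun j _ => ?_
    by_cases hj : j ∈ K <;> simp [hj]
  have hfst : MeasurePreserving Prod.fst (μ.prod μ) μ :=
    ⟨measurable_fst, by simp⟩
  have hsnd : MeasurePreserving Prod.snd (μ.prod μ) μ :=
    ⟨measurable_snd, by simp⟩
  have half : (1 : ENNReal) / 1 = 1 / 2 + 1 / 2 := by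
    rw [ENNReal.div_add_div_same, one_add_one_eq_two, one_div_one]
    exact (ENNReal.div_self two_ne_zero ENNReal.ofNat_ne_top).symm
  have hmul : ∀ g h : (Fin d → ℝ) × (Fin d → ℝ) → ℝ, MemLp g 2 (μ.prod μ) →
      MemLp h 2 (μ.prod μ) → Integrable (fun p => g p * h p) (μ.prod μ) := by
    intro g h hg hh
    have := hh.smul hg (r := 1) (hpqr := ⟨by simpa only [one_div] using half.symm⟩)
    rw [memLp_one_iff_integrable] at this
    simpa [Pi.smul_apply, smul_eq_mul, Pi.mul_def] using this
  have hf1 : MemLp (fun p : (Fin d → ℝ) × (Fin d → ℝ) => f p.1) 2 (μ.prod μ) :=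
    hf.comp_measurePreserving hfst
  have hf2 : MemLp (fun p : (Fin d → ℝ) × (Fin d → ℝ) => f p.2) 2 (μ.prod μ) :=
    hf.comp_measurePreserving hsnd
  have hfT : MemLp (fun p => f (T p)) 2 (μ.prod μ) := hf.comp_measurePreserving hT
  have hI1 : Integrable (fun p => f p.1 * f (T p)) (μ.prod μ) := hmul _ _ hf1 hfT
  have hI2 : Integrable (fun p => f p.1 * f p.2) (μ.prod μ) := hmul _ _ hf1 hf2
  have hIsub : Integrable (fun p : (Fin d → ℝ) × (Fin d → ℝ) =>
      f p.1 * (f (T p) - f p.2)) (μ.prod μ) := by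
    have := hI1.sub hI2
    simpa [mul_sub, Pi.sub_def] using this
  calc
    ∫ x, ∫ x', f x * (f (fun j => if j ∈ K then x j else x' j) - f x') ∂μ ∂μ
        = ∫ p, f p.1 * (f (T p) - f p.2) ∂(μ.prod μ) := by
          exact integral_integral hIsub
    _ = (∫ p, f p.1 * f (T p) ∂(μ.prod μ)) - ∫ p, f p.1 * f p.2 ∂(μ.prod μ) := by
          simp_rw [mul_sub]
          exact integral_sub hI1 hI2
    _ = (∫ x, ∫ x', f x * f (fun j => if j ∈ K then x j else x' j) ∂μ ∂μ)
          - (∫ x, f x ∂μ) ^ 2 := by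
          have h1 : ∫ x, ∫ x', f x * f (fun j => if j ∈ K then x j else x' j) ∂μ ∂μ
              = ∫ p, f p.1 * f (T p) ∂(μ.prod μ) := integral_integral hI1
          rw [← h1, integral_prod_mul, sq]
end

section
/- (Owen's formula) For f square-integrable on [0,1]^d with variable partition x = (y,z) and two independent copies x' = (y',z'), x'' = (y'',z''), D_y = ∫ [f(y,z) − f(y'',z)] [f(y,z') − f(y',z')] dy dz dy' dz' dy''. -/
open MeasureTheory

section OwenAux

variable {α β : Type*} [MeasurableSpace α] [MeasurableSpace β]

lemma owen_integrable_mul {μ : Measure α} {u v : α → ℝ}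
    (hu : MemLp u 2 μ) (hv : MemLp v 2 μ) :
    Integrable (fun x => u x * v x) μ := by
  have h : MemLp (u • v) 1 μ := by
    exact hv.smul hu
  have := memLp_one_iff_integrable.mp h
  exact this

lemma owen_mp_fst (μ : Measure α) (ν : Measure β) [SigmaFinite μ] [IsProbabilityMeasure ν] :
    MeasurePreserving (Prod.fst : α × β → α) (μ.prod ν) μ :=
  ⟨measurable_fst, by simp⟩

lemma owen_mp_snd (μ : Measure α) (ν : Measure β) [IsProbabilityMeasure μ] [SigmaFinite ν] :
    MeasurePreserving (Prod.snd : α × β → β) (μ.prod ν) ν :=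
  ⟨measurable_snd, by simp⟩

lemma owen_integral_comp {μa : Measure α} {μb : Measure β} {g : α → β}
    (hg : MeasurePreserving g μa μb) {h : β → ℝ} (hh : AEStronglyMeasurable h μb) :
    ∫ x, h (g x) ∂μa = ∫ y, h y ∂μb := by
  rw [← hg.map_eq] at hh ⊢
  exact (integral_map hg.measurable.aemeasurable hh).symm

end OwenAux

section MergeLemmas

variable {d : ℕ} (K : Finset (Fin d))

/-- merging two vectors along K -/
noncomputable def owenMerge (a b : Fin d → ℝ) : Fin d → ℝ :=
  fun j => if j ∈ K then a j else b j

lemma owenMerge_measurable :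
    Measurable (fun p : (Fin d → ℝ) × (Fin d → ℝ) => owenMerge K p.1 p.2) := by
  apply measurable_pi_lambda
  intro j
  by_cases h : j ∈ K
  · simpa [owenMerge, h, Function.comp_def] using (measurable_pi_apply j).comp measurable_fst
  · simpa [owenMerge, h, Function.comp_def] using (measurable_pi_apply j).comp measurable_snd

lemma owenMerge_merge_left (a b c : Fin d → ℝ) :
    owenMerge K (owenMerge K a b) c = owenMerge K a c := by
  funext j; by_cases h : j ∈ K <;> simp [owenMerge, h]

lemma owenMerge_merge_right (a b c : Fin d → ℝ) :
    owenMerge K a (owenMerge K b c) = owenMerge K a c := by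
  funext j; by_cases h : j ∈ K <;> simp [owenMerge, h]

lemma owen_merge_pres {μ : Measure (Fin d → ℝ)}
    (hμ : μ = Measure.pi fun _ => (volume : Measure ℝ).restrict (Set.Icc 0 1)) :
    MeasurePreserving (fun p : (Fin d → ℝ) × (Fin d → ℝ) => owenMerge K p.1 p.2)
      (μ.prod μ) μ := by
  haveI hν : IsProbabilityMeasure ((volume : Measure ℝ).restrict (Set.Icc 0 1)) :=
    ⟨by simp [Real.volume_Icc]⟩
  refine ⟨owenMerge_measurable K, ?_⟩
  rw [hμ]
  refine (Measure.pi_eq fun s hs => ?_).symm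
  rw [Measure.map_apply (owenMerge_measurable K) (MeasurableSet.univ_pi hs)]
  have hpre : (fun p : (Fin d → ℝ) × (Fin d → ℝ) => owenMerge K p.1 p.2) ⁻¹'
      Set.pi Set.univ s =
      (Set.pi Set.univ fun j => if j ∈ K then s j else Set.univ) ×ˢ
      (Set.pi Set.univ fun j => if j ∈ K then Set.univ else s j) := by
    ext ⟨a, b⟩
    simp only [Set.mem_preimage, Set.mem_pi, Set.mem_univ, forall_true_left, Set.mem_prod]
    constructor
    · intro h
      constructor
      · intro j; by_cases hj : j ∈ K
        · simpa [hj] using (by simpa [owenMerge, hj] using h j)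
        · simp [hj]
      · intro j; by_cases hj : j ∈ K
        · simp [hj]
        · simpa [hj] using (by simpa [owenMerge, hj] using h j)
    · rintro ⟨h1, h2⟩ j
      by_cases hj : j ∈ K
      · simpa [owenMerge, hj] using (by simpa [hj] using h1 j)
      · simpa [owenMerge, hj] using (by simpa [hj] using h2 j)
  rw [hpre, Measure.prod_prod, Measure.pi_pi, Measure.pi_pi, ← Finset.prod_mul_distrib]
  refine Finset.prod_congr rfl fun j _ => ?_
  by_cases hj : j ∈ K <;> simp [hj]

end MergeLemmas

/-- Owen's formula: for `f` square-integrable on `[0,1]^d` with variable partition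
`x = (y,z)` given by index set `K` and two independent copies `x' = (y',z')`,
`x'' = (y'',z'')`,
`D_y = ∫ [f(y,z) − f(y'',z)] [f(y,z') − f(y',z')] dx dx' dx''`, where
`D_y = ∫ f(y,z) f(y,z') dy dz dz' − f₀²`. -/
theorem owen_formula (d : ℕ) (f : (Fin d → ℝ) → ℝ)
    (μ : Measure (Fin d → ℝ))
    (hμ : μ = Measure.pi fun _ => (volume : Measure ℝ).restrict (Set.Icc 0 1))
    (hf : MemLp f 2 μ)
    (K : Finset (Fin d)) :
    ∫ x, ∫ x', ∫ x'',
        (f x - f (fun j => if j ∈ K then x'' j else x j))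
          * (f (fun j => if j ∈ K then x j else x' j) - f x') ∂μ ∂μ ∂μ
      = (∫ x, ∫ x', f x * f (fun j => if j ∈ K then x j else x' j) ∂μ ∂μ)
          - (∫ x, f x ∂μ) ^ 2 := by
  classical
  -- basic instances
  haveI hν : IsProbabilityMeasure ((volume : Measure ℝ).restrict (Set.Icc 0 1)) :=
    ⟨by simp [Real.volume_Icc]⟩
  haveI : IsProbabilityMeasure μ := by rw [hμ]; infer_instance
  -- measure preserving maps
  have hT : MeasurePreserving (fun p : (Fin d → ℝ) × (Fin d → ℝ) => owenMerge K p.1 p.2) (μ.prod μ) μ :=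
    owen_merge_pres K hμ
  have hTsw : MeasurePreserving (fun p : (Fin d → ℝ) × (Fin d → ℝ) => owenMerge K p.2 p.1) (μ.prod μ) μ :=
    hT.comp Measure.measurePreserving_swap
  have hfst : MeasurePreserving (Prod.fst : (Fin d → ℝ) × (Fin d → ℝ) → (Fin d → ℝ)) (μ.prod μ) μ := owen_mp_fst μ μ
  have hsnd : MeasurePreserving (Prod.snd : (Fin d → ℝ) × (Fin d → ℝ) → (Fin d → ℝ)) (μ.prod μ) μ := owen_mp_snd μ μ
  -- maps from the triple product
  set π : Measure ((Fin d → ℝ) × ((Fin d → ℝ) × (Fin d → ℝ))) := μ.prod (μ.prod μ) with hπ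
  have hA : MeasurePreserving (fun ω : (Fin d → ℝ) × ((Fin d → ℝ) × (Fin d → ℝ)) => ω.1) π μ := owen_mp_fst μ (μ.prod μ)
  have hsnd' : MeasurePreserving (Prod.snd : (Fin d → ℝ) × ((Fin d → ℝ) × (Fin d → ℝ)) → (Fin d → ℝ) × (Fin d → ℝ)) π (μ.prod μ) :=
    owen_mp_snd μ (μ.prod μ)
  have hB : MeasurePreserving (fun ω : (Fin d → ℝ) × ((Fin d → ℝ) × (Fin d → ℝ)) => ω.2.1) π μ := hfst.comp hsnd'
  have hAB : MeasurePreserving (fun ω : (Fin d → ℝ) × ((Fin d → ℝ) × (Fin d → ℝ)) => (ω.1, ω.2.1)) π (μ.prod μ) :=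
    (MeasurePreserving.id μ).prod hfst
  have hCA : MeasurePreserving (fun ω : (Fin d → ℝ) × ((Fin d → ℝ) × (Fin d → ℝ)) => (ω.2.2, ω.1)) π (μ.prod μ) :=
    Measure.measurePreserving_swap.comp ((MeasurePreserving.id μ).prod hsnd)
  have hM1 : MeasurePreserving (fun ω : (Fin d → ℝ) × ((Fin d → ℝ) × (Fin d → ℝ)) => owenMerge K ω.2.2 ω.1) π μ := hT.comp hCA
  have hM2 : MeasurePreserving (fun ω : (Fin d → ℝ) × ((Fin d → ℝ) × (Fin d → ℝ)) => owenMerge K ω.1 ω.2.1) π μ := hT.comp hAB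
  have h4pair : MeasurePreserving (fun ω : (Fin d → ℝ) × ((Fin d → ℝ) × (Fin d → ℝ)) => (owenMerge K ω.2.2 ω.1, ω.2.1)) π (μ.prod μ) := by
    have s1 : MeasurePreserving (Prod.map (id : (Fin d → ℝ) → (Fin d → ℝ)) (Prod.swap : (Fin d → ℝ) × (Fin d → ℝ) → (Fin d → ℝ) × (Fin d → ℝ))) π π :=
      (MeasurePreserving.id μ).prod Measure.measurePreserving_swap
    have s2 : MeasurePreserving (MeasurableEquiv.prodAssoc.symm :
        (Fin d → ℝ) × ((Fin d → ℝ) × (Fin d → ℝ)) ≃ᵐ ((Fin d → ℝ) × (Fin d → ℝ)) × (Fin d → ℝ)) π ((μ.prod μ).prod μ) :=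
      (measurePreserving_prodAssoc μ μ μ).symm _
    have s3 : MeasurePreserving (Prod.map (fun p : (Fin d → ℝ) × (Fin d → ℝ) => owenMerge K p.2 p.1) (id : (Fin d → ℝ) → (Fin d → ℝ)))
        ((μ.prod μ).prod μ) (μ.prod μ) := hTsw.prod (MeasurePreserving.id μ)
    exact (s3.comp (s2.comp s1))
  -- membership in L² of compositions
  have hfA : MemLp (fun ω : (Fin d → ℝ) × ((Fin d → ℝ) × (Fin d → ℝ)) => f ω.1) 2 π := hf.comp_measurePreserving hA
  have hfB : MemLp (fun ω : (Fin d → ℝ) × ((Fin d → ℝ) × (Fin d → ℝ)) => f ω.2.1) 2 π := hf.comp_measurePreserving hB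
  have hfM1 : MemLp (fun ω : (Fin d → ℝ) × ((Fin d → ℝ) × (Fin d → ℝ)) => f (owenMerge K ω.2.2 ω.1)) 2 π := hf.comp_measurePreserving hM1
  have hfM2 : MemLp (fun ω : (Fin d → ℝ) × ((Fin d → ℝ) × (Fin d → ℝ)) => f (owenMerge K ω.1 ω.2.1)) 2 π := hf.comp_measurePreserving hM2
  -- integrabilities on the triple product
  have int1 : Integrable (fun ω : (Fin d → ℝ) × ((Fin d → ℝ) × (Fin d → ℝ)) => f ω.1 * f (owenMerge K ω.1 ω.2.1)) π :=
    owen_integrable_mul hfA hfM2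
  have int2 : Integrable (fun ω : (Fin d → ℝ) × ((Fin d → ℝ) × (Fin d → ℝ)) => f ω.1 * f ω.2.1) π :=
    owen_integrable_mul hfA hfB
  have int3 : Integrable (fun ω : (Fin d → ℝ) × ((Fin d → ℝ) × (Fin d → ℝ)) => f (owenMerge K ω.2.2 ω.1) * f (owenMerge K ω.1 ω.2.1)) π :=
    owen_integrable_mul hfM1 hfM2
  have int4 : Integrable (fun ω : (Fin d → ℝ) × ((Fin d → ℝ) × (Fin d → ℝ)) => f (owenMerge K ω.2.2 ω.1) * f ω.2.1) π :=
    owen_integrable_mul hfM1 hfB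
  set F : (Fin d → ℝ) × ((Fin d → ℝ) × (Fin d → ℝ)) → ℝ := fun ω =>
    (f ω.1 - f (owenMerge K ω.2.2 ω.1)) * (f (owenMerge K ω.1 ω.2.1) - f ω.2.1) with hF
  have hFeq : F = fun ω =>
      (f ω.1 * f (owenMerge K ω.1 ω.2.1) - f ω.1 * f ω.2.1) -
      (f (owenMerge K ω.2.2 ω.1) * f (owenMerge K ω.1 ω.2.1) - f (owenMerge K ω.2.2 ω.1) * f ω.2.1) := by
    funext ω; simp only [hF]; ring
  have intF : Integrable F π := by
    rw [hFeq]; exact (int1.sub int2).sub (int3.sub int4)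
  -- Step 1: the triple iterated integral equals the integral over the product measure
  have step1 : (∫ x, ∫ x', ∫ x'',
        (f x - f (fun j => if j ∈ K then x'' j else x j))
          * (f (fun j => if j ∈ K then x j else x' j) - f x') ∂μ ∂μ ∂μ)
      = ∫ ω, F ω ∂π := by
    have h1 : (∫ x, ∫ x', ∫ x'',
        (f x - f (fun j => if j ∈ K then x'' j else x j))
          * (f (fun j => if j ∈ K then x j else x' j) - f x') ∂μ ∂μ ∂μ)
        = ∫ x, ∫ q, F (x, q) ∂(μ.prod μ) ∂μ := by
      refine integral_congr_ae ?_
      filter_upwards [intF.prod_right_ae] with x hx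
      exact integral_integral hx
    rw [h1]
    exact integral_integral intF
  -- Step 2: split into four integrals
  have step2 : ∫ ω, F ω ∂π =
      (∫ ω, f ω.1 * f (owenMerge K ω.1 ω.2.1) ∂π) - (∫ ω, f ω.1 * f ω.2.1 ∂π)
      - ((∫ ω, f (owenMerge K ω.2.2 ω.1) * f (owenMerge K ω.1 ω.2.1) ∂π)
         - (∫ ω, f (owenMerge K ω.2.2 ω.1) * f ω.2.1 ∂π)) := by
    have int12 : Integrable (fun ω : (Fin d → ℝ) × ((Fin d → ℝ) × (Fin d → ℝ)) =>
        f ω.1 * f (owenMerge K ω.1 ω.2.1) - f ω.1 * f ω.2.1) π := int1.sub int2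
    have int34 : Integrable (fun ω : (Fin d → ℝ) × ((Fin d → ℝ) × (Fin d → ℝ)) =>
        f (owenMerge K ω.2.2 ω.1) * f (owenMerge K ω.1 ω.2.1)
          - f (owenMerge K ω.2.2 ω.1) * f ω.2.1) π := int3.sub int4
    rw [hFeq, integral_sub int12 int34, integral_sub int1 int2, integral_sub int3 int4]
  -- integrability over μ.prod μ needed for evaluations
  have hG1 : Integrable (fun p : (Fin d → ℝ) × (Fin d → ℝ) => f p.1 * f (owenMerge K p.1 p.2)) (μ.prod μ) :=
    owen_integrable_mul (hf.comp_measurePreserving hfst) (hf.comp_measurePreserving hT)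
  have hG2 : Integrable (fun p : (Fin d → ℝ) × (Fin d → ℝ) => f p.1 * f p.2) (μ.prod μ) :=
    owen_integrable_mul (hf.comp_measurePreserving hfst) (hf.comp_measurePreserving hsnd)
  have hfi : Integrable f μ := hf.integrable one_le_two
  -- evaluation of I1
  have hI1 : (∫ ω, f ω.1 * f (owenMerge K ω.1 ω.2.1) ∂π)
      = ∫ p, f p.1 * f (owenMerge K p.1 p.2) ∂(μ.prod μ) :=
    owen_integral_comp hAB hG1.aestronglyMeasurable
  -- evaluation of I2
  have hI2 : (∫ ω, f ω.1 * f ω.2.1 ∂π) = (∫ x, f x ∂μ) * (∫ x, f x ∂μ) := by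
    rw [owen_integral_comp hAB hG2.aestronglyMeasurable]
    exact integral_prod_mul f f
  -- evaluation of I4
  have hI4 : (∫ ω, f (owenMerge K ω.2.2 ω.1) * f ω.2.1 ∂π) = (∫ x, f x ∂μ) * (∫ x, f x ∂μ) := by
    rw [owen_integral_comp h4pair hG2.aestronglyMeasurable]
    exact integral_prod_mul f f
  -- evaluation of I3
  set u : (Fin d → ℝ) → ℝ := fun x => ∫ c, f (owenMerge K c x) ∂μ with hu
  set v : (Fin d → ℝ) → ℝ := fun x => ∫ b, f (owenMerge K x b) ∂μ with hv
  have hum : AEStronglyMeasurable u μ := by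
    have : AEStronglyMeasurable (fun p : (Fin d → ℝ) × (Fin d → ℝ) => f (owenMerge K p.2 p.1)) (μ.prod μ) :=
      (hf.comp_measurePreserving hTsw).aestronglyMeasurable
    exact this.integral_prod_right'
  have hvm : AEStronglyMeasurable v μ := by
    have : AEStronglyMeasurable (fun p : (Fin d → ℝ) × (Fin d → ℝ) => f (owenMerge K p.1 p.2)) (μ.prod μ) :=
      (hf.comp_measurePreserving hT).aestronglyMeasurable
    exact this.integral_prod_right'
  have hvmerge : ∀ a b : (Fin d → ℝ), v (owenMerge K a b) = v a := by
    intro a b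
    simp only [hv]
    refine integral_congr_ae (Filter.Eventually.of_forall fun c => ?_)
    simp only [owenMerge_merge_left]
  have humerge : ∀ a b : (Fin d → ℝ), u (owenMerge K a b) = u b := by
    intro a b
    simp only [hu]
    refine integral_congr_ae (Filter.Eventually.of_forall fun c => ?_)
    simp only [owenMerge_merge_right]
  have hintv : (∫ x, v x ∂μ) = ∫ x, f x ∂μ := by
    have hint : Integrable (Function.uncurry fun x b => f (owenMerge K x b)) (μ.prod μ) := by
      exact (hf.comp_measurePreserving hT).integrable one_le_two
    have h1 : (∫ x, v x ∂μ) = ∫ p, f (owenMerge K p.1 p.2) ∂(μ.prod μ) :=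
      integral_integral (f := fun x b => f (owenMerge K x b)) hint
    rw [h1]
    exact owen_integral_comp hT hf.aestronglyMeasurable
  have hintu : (∫ x, u x ∂μ) = ∫ x, f x ∂μ := by
    have hint : Integrable (Function.uncurry fun x c => f (owenMerge K c x)) (μ.prod μ) := by
      exact (hf.comp_measurePreserving hTsw).integrable one_le_two
    have h1 : (∫ x, u x ∂μ) = ∫ p, f (owenMerge K p.2 p.1) ∂(μ.prod μ) :=
      integral_integral (f := fun x c => f (owenMerge K c x)) hint
    rw [h1]
    exact owen_integral_comp hTsw hf.aestronglyMeasurable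
  have hI3 : (∫ ω, f (owenMerge K ω.2.2 ω.1) * f (owenMerge K ω.1 ω.2.1) ∂π)
      = (∫ x, f x ∂μ) * (∫ x, f x ∂μ) := by
    have h1 : (∫ ω, f (owenMerge K ω.2.2 ω.1) * f (owenMerge K ω.1 ω.2.1) ∂π)
        = ∫ x, v x * u x ∂μ := by
      rw [hπ, integral_prod _ int3]
      refine integral_congr_ae (Filter.Eventually.of_forall fun x => ?_)
      have h2 : (∫ q : (Fin d → ℝ) × (Fin d → ℝ), f (owenMerge K q.2 x) * f (owenMerge K x q.1) ∂(μ.prod μ))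
          = ∫ q : (Fin d → ℝ) × (Fin d → ℝ), (fun b => f (owenMerge K x b)) q.1 * (fun c => f (owenMerge K c x)) q.2 ∂(μ.prod μ) := by
        refine integral_congr_ae (Filter.Eventually.of_forall fun q => ?_)
        exact mul_comm _ _
      calc (∫ q : (Fin d → ℝ) × (Fin d → ℝ), f (owenMerge K q.2 x) * f (owenMerge K x q.1) ∂(μ.prod μ))
          = ∫ q : (Fin d → ℝ) × (Fin d → ℝ), (fun b => f (owenMerge K x b)) q.1 * (fun c => f (owenMerge K c x)) q.2 ∂(μ.prod μ) := h2
        _ = (∫ b, f (owenMerge K x b) ∂μ) * (∫ c, f (owenMerge K c x) ∂μ) := by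
            exact integral_prod_mul (fun b => f (owenMerge K x b)) (fun c => f (owenMerge K c x))
        _ = v x * u x := rfl
    have h3 : (∫ x, v x * u x ∂μ)
        = ∫ p : (Fin d → ℝ) × (Fin d → ℝ), v (owenMerge K p.1 p.2) * u (owenMerge K p.1 p.2) ∂(μ.prod μ) :=
      (owen_integral_comp hT (hvm.mul hum)).symm
    have h4 : (∫ p : (Fin d → ℝ) × (Fin d → ℝ), v (owenMerge K p.1 p.2) * u (owenMerge K p.1 p.2) ∂(μ.prod μ))
        = ∫ p : (Fin d → ℝ) × (Fin d → ℝ), v p.1 * u p.2 ∂(μ.prod μ) := by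
      refine integral_congr_ae (Filter.Eventually.of_forall fun p => ?_)
      simp only [hvmerge, humerge]
    rw [h1, h3, h4, integral_prod_mul v u, hintv, hintu]
  -- assemble RHS first term
  have hRHS1 : (∫ x, ∫ x', f x * f (fun j => if j ∈ K then x j else x' j) ∂μ ∂μ)
      = ∫ p, f p.1 * f (owenMerge K p.1 p.2) ∂(μ.prod μ) := integral_integral hG1
  rw [step1, step2, hI1, hI2, hI3, hI4, hRHS1]
  ring
end
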